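/- Let N ≥ 1, let R be an N×N real matrix with R_{mn} ≥ 0 for all m ≠ n, let p^eq : Fin N → ℝ with p^eq_n > 0 satisfy detailed balance R_{nm}·p^eq_m = R_{mn}·p^eq_n, and let p : Fin N → ℝ with p_n > 0. Define (K_p v)_n := Σ_{m≠n} R_{nm} · p^eq_m · Φ(p_n/p^eq_n, p_m/p^eq_m) · (v_n − v_m). Then for every w ∈ ℝ^N with w_n ∈ {−1, +1} for all n, ⟨w, K_p w⟩ ≤ 2 · Σ_{(n,m) : n≠m, w_n ≠ w_m} R_{mn} · p_n, where the sum on the right is over ordered pairs (n,m) with n ≠ m and w_n ≠ w_m. -/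

import Mathlib

/-- The logarithmic mean of two positive real numbers. -/
noncomputable def logMean (x y : ℝ) : ℝ :=
  if x = y then x else (x - y) / (Real.log x - Real.log y)

/-- The Onsager-type matrix `K_p` acting on a vector `v`:
`(K_p v)_n = Σ_{m≠n} R_{nm} p^eq_m Φ(p_n/p^eq_n, p_m/p^eq_m) (v_n − v_m)`. -/
noncomputable def Kop {N : ℕ} (R : Matrix (Fin N) (Fin N) ℝ) (peq p v : Fin N → ℝ) :
    Fin N → ℝ :=
  fun n => ∑ m ∈ Finset.univ.filter (· ≠ n),
    R n m * peq m * logMean (p n / peq n) (p m / peq m) * (v n - v m)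

lemma logMean_symm (x y : ℝ) : logMean x y = logMean y x := by
  unfold logMean
  rcases eq_or_ne x y with h | h
  · simp [h]
  · rw [if_neg h, if_neg (Ne.symm h)]
    rw [← neg_sub x y, ← neg_sub (Real.log x) (Real.log y), neg_div_neg_eq]

lemma key_ineq {t : ℝ} (ht : 1 ≤ t) : 2 * (t - 1) ≤ (t + 1) * Real.log t := by
  set g : ℝ → ℝ := fun s => (s + 1) * Real.log s - 2 * (s - 1) with hg
  have hd : ∀ s : ℝ, 0 < s → HasDerivAt g (Real.log s + (s + 1) / s - 2) s := by
    intro s hs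
    have h1 : HasDerivAt (fun s : ℝ => (s + 1) * Real.log s)
        (1 * Real.log s + (s + 1) * s⁻¹) s :=
      ((hasDerivAt_id s).add_const 1).mul (Real.hasDerivAt_log hs.ne')
    have h2 : HasDerivAt (fun s : ℝ => 2 * (s - 1)) 2 s := by
      simpa using ((hasDerivAt_id s).sub_const 1).const_mul 2
    exact (h1.sub h2).congr_deriv (by ring)
  have hmono : MonotoneOn g (Set.Ici (1:ℝ)) := by
    apply monotoneOn_of_deriv_nonneg (convex_Ici 1)
    · intro s hs
      exact ((hd s (lt_of_lt_of_le one_pos hs)).continuousAt).continuousWithinAt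
    · intro s hs
      rw [interior_Ici] at hs
      exact ((hd s (lt_trans one_pos hs)).differentiableAt).differentiableWithinAt
    · intro s hs
      rw [interior_Ici] at hs
      have hs0 : (0:ℝ) < s := lt_trans one_pos hs
      rw [(hd s hs0).deriv]
      have hlog : 1 - s⁻¹ ≤ Real.log s := Real.one_sub_inv_le_log_of_pos hs0
      have h2 : (s + 1) / s = 1 + s⁻¹ := by field_simp
      rw [h2]
      linarith
  have h0 : g 1 = 0 := by simp [hg]
  have := hmono (Set.mem_Ici.mpr le_rfl) (Set.mem_Ici.mpr ht) ht
  rw [h0] at this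
  simpa [hg] using this

lemma logMean_le_am {x y : ℝ} (hx : 0 < x) (hy : 0 < y) :
    logMean x y ≤ (x + y) / 2 := by
  have main : ∀ a b : ℝ, 0 < a → 0 < b → b < a → logMean a b ≤ (a + b) / 2 := by
    intro a b ha hb hba
    have hne : a ≠ b := ne_of_gt hba
    rw [logMean, if_neg hne]
    have hL : Real.log a - Real.log b = Real.log (a / b) :=
      (Real.log_div ha.ne' hb.ne').symm
    have ht : 1 < a / b := (one_lt_div hb).mpr hba
    have hLpos : 0 < Real.log a - Real.log b := by
      rw [hL]; exact Real.log_pos ht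
    rw [div_le_div_iff₀ hLpos two_pos]
    have := key_ineq ht.le
    have hmul := mul_le_mul_of_nonneg_left this hb.le
    rw [hL]
    calc (a - b) * 2 = b * (2 * (a / b - 1)) := by field_simp
      _ ≤ b * ((a / b + 1) * Real.log (a / b)) := hmul
      _ = (a + b) * Real.log (a / b) := by field_simp
  rcases lt_trichotomy x y with h | h | h
  · rw [logMean_symm, add_comm]; exact main y x hy hx h
  · rw [logMean, if_pos h]; linarith
  · exact main x y hx hy h

/-- For every `w` with entries `±1`, `⟨w, K_p w⟩ ≤ 2 Σ_{n≠m, w_n≠w_m} R_{mn} p_n`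
(the partial dynamical activity bound). -/
theorem inner_Kop_le_two_mul_partial_activity (N : ℕ) (hN : 1 ≤ N)
    (R : Matrix (Fin N) (Fin N) ℝ) (hR : ∀ m n : Fin N, m ≠ n → 0 ≤ R m n)
    (peq : Fin N → ℝ) (hpeq : ∀ n, 0 < peq n)
    (hdb : ∀ n m : Fin N, R n m * peq m = R m n * peq n)
    (p : Fin N → ℝ) (hp : ∀ n, 0 < p n)
    (w : Fin N → ℝ) (hw : ∀ n, w n = 1 ∨ w n = -1) :
    ∑ n, w n * Kop R peq p w n
      ≤ 2 * ∑ nm ∈ Finset.univ.filter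
          (fun nm : Fin N × Fin N => nm.1 ≠ nm.2 ∧ w nm.1 ≠ w nm.2),
          R nm.2 nm.1 * p nm.1 := by
  classical
  set S := Finset.univ.filter
      (fun nm : Fin N × Fin N => nm.1 ≠ nm.2 ∧ w nm.1 ≠ w nm.2) with hS
  have step1 : ∑ n, w n * Kop R peq p w n ≤
      ∑ n, ∑ m ∈ Finset.univ.filter (· ≠ n),
        (if w n ≠ w m then R m n * p n + R n m * p m else 0) := by
    apply Finset.sum_le_sum
    intro n _
    rw [Kop, Finset.mul_sum]
    apply Finset.sum_le_sum
    intro m hm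
    have hmn : m ≠ n := (Finset.mem_filter.mp hm).2
    by_cases hwe : w n = w m
    · simp [hwe]
    · rw [if_pos hwe]
      have h2 : w n * (w n - w m) = 2 := by
        rcases hw n with h1 | h1 <;> rcases hw m with h3 | h3 <;>
          first
          | (exfalso; rw [h1, h3] at hwe; exact hwe rfl)
          | (rw [h1, h3]; ring)
      set Φ := logMean (p n / peq n) (p m / peq m) with hΦdef
      have hc0 : 0 ≤ R n m * peq m := mul_nonneg (hR n m (Ne.symm hmn)) (hpeq m).le
      have hΦ : Φ ≤ (p n / peq n + p m / peq m) / 2 :=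
        logMean_le_am (div_pos (hp n) (hpeq n)) (div_pos (hp m) (hpeq m))
      have e1 : R n m * peq m * (p n / peq n) = R m n * p n := by
        rw [hdb n m, mul_assoc, mul_comm (peq n) (p n / peq n), div_mul_cancel₀ (p n) (hpeq n).ne']
      have e2 : R n m * peq m * (p m / peq m) = R n m * p m := by
        rw [mul_assoc, mul_comm (peq m) (p m / peq m), div_mul_cancel₀ (p m) (hpeq m).ne']
      calc w n * (R n m * peq m * Φ * (w n - w m))
          = 2 * (R n m * peq m * Φ) := by
            rw [show w n * (R n m * peq m * Φ * (w n - w m))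
                = (R n m * peq m * Φ) * (w n * (w n - w m)) by ring, h2]; ring
        _ ≤ 2 * (R n m * peq m * ((p n / peq n + p m / peq m) / 2)) := by
            have := mul_le_mul_of_nonneg_left hΦ hc0
            linarith
        _ = R n m * peq m * (p n / peq n) + R n m * peq m * (p m / peq m) := by ring
        _ = R m n * p n + R n m * p m := by rw [e1, e2]
  have step2 : ∑ n, ∑ m ∈ Finset.univ.filter (· ≠ n),
        (if w n ≠ w m then R m n * p n + R n m * p m else 0)
      = ∑ nm ∈ S, (R nm.2 nm.1 * p nm.1 + R nm.1 nm.2 * p nm.2) := by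
    rw [hS, Finset.sum_filter, Fintype.sum_prod_type]
    apply Finset.sum_congr rfl
    intro n _
    rw [Finset.sum_filter]
    apply Finset.sum_congr rfl
    intro m _
    by_cases h1 : n = m
    · simp [h1]
    · by_cases h2 : w n = w m <;> simp [h1, Ne.symm h1, h2]
  have hswap : ∑ nm ∈ S, R nm.1 nm.2 * p nm.2 = ∑ nm ∈ S, R nm.2 nm.1 * p nm.1 := by
    apply Finset.sum_equiv (Equiv.prodComm (Fin N) (Fin N))
    · intro nm
      simp only [hS, Finset.mem_filter, Finset.mem_univ, true_and, Equiv.prodComm_apply,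
        Prod.fst_swap, Prod.snd_swap]
      constructor
      · rintro ⟨a, b⟩; exact ⟨a.symm, b.symm⟩
      · rintro ⟨a, b⟩; exact ⟨a.symm, b.symm⟩
    · intro nm _
      simp
  calc ∑ n, w n * Kop R peq p w n
      ≤ ∑ nm ∈ S, (R nm.2 nm.1 * p nm.1 + R nm.1 nm.2 * p nm.2) := step2 ▸ step1
    _ = ∑ nm ∈ S, R nm.2 nm.1 * p nm.1 + ∑ nm ∈ S, R nm.1 nm.2 * p nm.2 :=
        Finset.sum_add_distrib
    _ = 2 * ∑ nm ∈ S, R nm.2 nm.1 * p nm.1 := by rw [hswap]; ring
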